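/- The bias of the faithfulness estimator is bounded as |E[M̂] − m| ≤ Σ_{π ∈ E} p(π) · exp(−(n−1)·q(π)), where m = Σ_x μ(x) · q(f(x)|e(x)) is the true faithfulness measure. -/

import Mathlib

open Classical

open Classical Finset

lemma bin {X : Type*} [Fintype X] (ν : X → ℝ) (hν1 : ∑ x, ν x = 1)
    (A : X → Prop) :
    ∀ (m : ℕ) (F : ℕ → ℝ),
    ∑ s : Fin m → X, (∏ j, ν (s j)) * F (#(univ.filter (fun j => A (s j))))
      = ∑ k ∈ range (m+1), ((m.choose k : ℝ) * (∑ x, if A x then ν x else 0)^k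
          * (1 - (∑ x, if A x then ν x else 0))^(m-k)) * F k := by
  set qA := ∑ x, if A x then ν x else 0 with hqA
  have hcompl : ∑ x, (if A x then (0:ℝ) else ν x) = 1 - qA := by
    rw [hqA, eq_sub_iff_add_eq, ← Finset.sum_add_distrib, ← hν1]
    exact Finset.sum_congr rfl fun x _ => by by_cases h : A x <;> simp [h]
  intro m
  induction m with
  | zero => intro F; simp
  | succ m ih =>
    intro F
    rw [← Equiv.sum_comp (Fin.consEquiv (fun _ : Fin (m+1) => X))
      (fun s => (∏ j, ν (s j)) * F (#(univ.filter (fun j => A (s j)))))]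
    rw [Fintype.sum_prod_type]
    have hcount : ∀ (x : X) (s : Fin m → X),
        #(univ.filter fun j => A (Fin.cons (α := fun _ => X) x s j))
        = (if A x then 1 else 0) + #(univ.filter fun j => A (s j)) := by
      intro x s
      rw [card_filter, card_filter, Fin.sum_univ_succ]
      simp
    have step1 : ∀ x : X, (∑ s : Fin m → X,
        (∏ j, ν ((Fin.consEquiv (fun _ : Fin (m+1) => X)) (x, s) j))
          * F (#(univ.filter (fun j => A ((Fin.consEquiv (fun _ : Fin (m+1) => X)) (x, s) j)))))
        = (if A x then ν x else 0) * (∑ s : Fin m → X, (∏ j, ν (s j)) * F (#(univ.filter (fun j => A (s j))) + 1))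
          + (if A x then 0 else ν x) * (∑ s : Fin m → X, (∏ j, ν (s j)) * F (#(univ.filter (fun j => A (s j))))) := by
      intro x
      have : ∀ s : Fin m → X, (Fin.consEquiv (fun _ : Fin (m+1) => X)) (x, s) = Fin.cons (α := fun _ => X) x s :=
        fun _ => rfl
      simp only [this, Fin.prod_univ_succ, Fin.cons_zero, Fin.cons_succ, hcount]
      by_cases h : A x <;> simp [h, Finset.mul_sum, add_comm, mul_assoc]
    simp only [step1]
    rw [Finset.sum_add_distrib, ← Finset.sum_mul, ← Finset.sum_mul, hcompl, ← hqA]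
    rw [ih, ih (fun k => F (k+1))]
    -- now pure algebra over range sums
    rw [Finset.sum_range_succ' (fun k => ((((m+1).choose k : ℝ)) * qA^k * (1-qA)^(m+1-k)) * F k) (m+1)]
    have e1 : qA * ∑ k ∈ range (m+1), ((m.choose k : ℝ) * qA ^ k * (1 - qA) ^ (m - k)) * F (k+1)
        = ∑ k ∈ range (m+1), ((m.choose k : ℝ) * qA ^ (k+1) * (1 - qA) ^ (m - k)) * F (k+1) := by
      rw [Finset.mul_sum]; exact Finset.sum_congr rfl fun k _ => by ring
    have e2 : (1 - qA) * ∑ k ∈ range (m+1), ((m.choose k : ℝ) * qA ^ k * (1 - qA) ^ (m - k)) * F k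
        = ∑ k ∈ range m, ((m.choose (k+1) : ℝ) * qA ^ (k+1) * (1 - qA) ^ (m - k)) * F (k+1)
          + (1 - qA) ^ (m+1) * F 0 := by
      rw [Finset.sum_range_succ' (fun k => ((m.choose k : ℝ) * qA ^ k * (1 - qA) ^ (m - k)) * F k) m]
      rw [mul_add, Finset.mul_sum]
      congr 1
      · exact Finset.sum_congr rfl fun k hk => by
          have hk' : k < m := Finset.mem_range.mp hk
          have : m - k = (m - (k+1)) + 1 := by omega
          rw [this, pow_succ]; ring
      · simp [pow_succ]; ring
    rw [e1, e2]
    have e3 : ∑ k ∈ range m, ((m.choose (k+1) : ℝ) * qA ^ (k+1) * (1 - qA) ^ (m - k)) * F (k+1)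
        = ∑ k ∈ range (m+1), ((m.choose (k+1) : ℝ) * qA ^ (k+1) * (1 - qA) ^ (m - k)) * F (k+1) := by
      rw [Finset.sum_range_succ]; simp
    rw [e3, ← add_assoc, ← Finset.sum_add_distrib]
    congr 1
    · exact Finset.sum_congr rfl fun k hk => by
        have hk' : k < m + 1 := Finset.mem_range.mp hk
        have hc : ((m+1).choose (k+1) : ℝ) = (m.choose k : ℝ) + (m.choose (k+1) : ℝ) := by
          rw [Nat.choose_succ_succ]; push_cast; ring
        have he : m + 1 - (k+1) = m - k := by omega
        rw [he, hc]; ring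
    · simp

lemma phi {X : Type*} [Fintype X] (ν : X → ℝ) (hν1 : ∑ x, ν x = 1)
    (A : X → Prop) (m : ℕ) (hq0 : 0 < ∑ x, if A x then ν x else 0) :
    ∑ s : Fin m → X, (∏ j, ν (s j)) * (1 / ((#(univ.filter (fun j => A (s j))) : ℝ) + 1))
      = (1 - (1 - (∑ x, if A x then ν x else 0))^(m+1))
          / (((m:ℝ)+1) * (∑ x, if A x then ν x else 0)) := by
  set qA := ∑ x, if A x then ν x else 0 with hqA
  rw [bin ν hν1 A m (fun k => 1 / ((k:ℝ)+1))]
  rw [eq_div_iff (by positivity)]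
  rw [Finset.sum_mul]
  have key : ∀ k ∈ range (m+1),
      ((m.choose k : ℝ) * qA^k * (1 - qA)^(m-k) * (1/((k:ℝ)+1))) * (((m:ℝ)+1) * qA)
      = ((m+1).choose (k+1) : ℝ) * qA^(k+1) * (1 - qA)^(m-k) := by
    intro k _
    have h := Nat.add_one_mul_choose_eq m k
    have hR : ((m:ℝ)+1) * (m.choose k : ℝ) = ((m+1).choose (k+1) : ℝ) * ((k:ℝ)+1) := by
      exact_mod_cast h
    have hk1 : ((k:ℝ)+1) ≠ 0 := by positivity
    field_simp
    ring_nf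
    ring_nf at hR
    linear_combination (qA^(k+1) * (1 - qA)^(m-k)) * hR
  rw [Finset.sum_congr rfl key]
  have expand : ∑ k ∈ range (m+2), ((m+1).choose k : ℝ) * qA^k * (1-qA)^(m+1-k) = 1 := by
    have h := add_pow qA (1 - qA) (m+1)
    have h1 : qA + (1 - qA) = 1 := by ring
    rw [h1, one_pow] at h
    exact (Finset.sum_congr rfl fun k _ => by ring).trans h.symm
  rw [Finset.sum_range_succ'] at expand
  simp only [Nat.succ_sub_succ, Nat.choose_zero_right, Nat.cast_one, one_mul, pow_zero,
    Nat.sub_zero, mul_one] at expand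
  linarith

-- transfer to a general fintype index
lemma phiJ {X J : Type*} [Fintype X] [Fintype J] (ν : X → ℝ) (hν1 : ∑ x, ν x = 1)
    (A : X → Prop) (hq0 : 0 < ∑ x, if A x then ν x else 0) :
    ∑ s : J → X, (∏ j, ν (s j)) * (1 / ((#(univ.filter (fun j => A (s j))) : ℝ) + 1))
      = (1 - (1 - (∑ x, if A x then ν x else 0))^(Fintype.card J + 1))
          / (((Fintype.card J : ℝ)+1) * (∑ x, if A x then ν x else 0)) := by
  set m := Fintype.card J with hm
  let eJ : J ≃ Fin m := Fintype.equivFin J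
  let eF : (J → X) ≃ (Fin m → X) := Equiv.arrowCongr eJ (Equiv.refl X)
  rw [← Equiv.sum_comp eF.symm
    (fun s : J → X => (∏ j, ν (s j)) * (1 / ((#(univ.filter (fun j => A (s j))) : ℝ) + 1)))]
  have key : ∀ t : Fin m → X,
      (∏ j, ν ((eF.symm t) j)) * (1 / ((#(univ.filter (fun j => A ((eF.symm t) j))) : ℝ) + 1))
      = (∏ j, ν (t j)) * (1 / ((#(univ.filter (fun j => A (t j))) : ℝ) + 1)) := by
    intro t
    have happ : ∀ j : J, (eF.symm t) j = t (eJ j) := fun j => by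
      simp [eF, Equiv.arrowCongr]
    have h1 : ∏ j, ν ((eF.symm t) j) = ∏ j, ν (t j) := by
      simp only [happ]
      exact Equiv.prod_comp eJ (fun i => ν (t i))
    have h2 : #(univ.filter (fun j => A ((eF.symm t) j))) = #(univ.filter (fun j => A (t j))) := by
      simp only [happ, card_filter]
      exact Equiv.sum_comp eJ (fun i => if A (t i) then 1 else 0)
    rw [h1, h2]
  rw [Finset.sum_congr rfl (fun t _ => key t)]
  exact phi ν hν1 A m hq0

section split
variable {X J : Type*} [Fintype X] [Fintype J] [DecidableEq J]

lemma split_prod (ν : X → ℝ) (j : J) (x : X) (s' : {j' // j' ≠ j} → X) :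
    ∏ j'' : J, ν ((Equiv.funSplitAt j X).symm (x, s') j'')
      = ν x * ∏ j', ν (s' j') := by
  rw [← Finset.mul_prod_erase univ _ (mem_univ j)]
  congr 1
  · simp [Equiv.funSplitAt_symm_apply]
  · rw [Finset.prod_subtype (p := fun j' => j' ≠ j) (univ.erase j) (by simp)
      (fun j'' => ν ((Equiv.funSplitAt j X).symm (x, s') j''))]
    exact Finset.prod_congr rfl fun a _ => by
      simp [Equiv.funSplitAt_symm_apply, a.2]

lemma split_count (P : X → Prop) (j : J) (x : X) (s' : {j' // j' ≠ j} → X) :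
    #(univ.filter fun j'' : J => P ((Equiv.funSplitAt j X).symm (x, s') j''))
      = (if P x then 1 else 0) + #(univ.filter fun j' => P (s' j')) := by
  rw [card_filter, card_filter, ← Finset.add_sum_erase univ _ (mem_univ j)]
  congr 1
  · simp [Equiv.funSplitAt_symm_apply]
  · rw [Finset.sum_subtype (p := fun j' => j' ≠ j) (univ.erase j) (by simp)
      (fun j'' => if P ((Equiv.funSplitAt j X).symm (x, s') j'') then 1 else 0)]
    exact Finset.sum_congr rfl fun a _ => by
      simp [Equiv.funSplitAt_symm_apply, a.2]

lemma split_sum (g : (J → X) → ℝ) (j : J) :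
    ∑ s : J → X, g s
      = ∑ x : X, ∑ s' : {j' // j' ≠ j} → X, g ((Equiv.funSplitAt j X).symm (x, s')) := by
  rw [← Equiv.sum_comp (Equiv.funSplitAt j X).symm g, Fintype.sum_prod_type]

end split

lemma core {X J : Type*} [Fintype X] [Fintype J] (ν : X → ℝ)
    (hν1 : ∑ x, ν x = 1) (A B : X → Prop) (hBA : ∀ x, B x → A x)
    (hq0 : 0 < ∑ x, if A x then ν x else 0) :
    ∑ s : J → X, (∏ j, ν (s j)) *
        (if 0 < #(univ.filter fun j => A (s j)) then
          (#(univ.filter fun j => B (s j)) : ℝ) / (#(univ.filter fun j => A (s j)) : ℝ)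
        else 0)
      = ((∑ x, if B x then ν x else 0) / (∑ x, if A x then ν x else 0))
          * (1 - (1 - ∑ x, if A x then ν x else 0) ^ Fintype.card J) := by
  classical
  set qA := ∑ x, if A x then ν x else 0 with hqA
  set rB := ∑ x, if B x then ν x else 0 with hrB
  have ptwise : ∀ s : J → X,
      (if 0 < #(univ.filter fun j => A (s j)) then
        (#(univ.filter fun j => B (s j)) : ℝ) / (#(univ.filter fun j => A (s j)) : ℝ) else 0)
      = ∑ j : J, (if B (s j) then (1:ℝ) else 0) / (#(univ.filter fun j' => A (s j')) : ℝ) := by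
    intro s
    rw [← Finset.sum_div]
    have hsum : ∑ j : J, (if B (s j) then (1:ℝ) else 0)
        = (#(univ.filter fun j => B (s j)) : ℝ) := by
      rw [card_filter]
      push_cast
      exact Finset.sum_congr rfl fun j _ => by by_cases h : B (s j) <;> simp [h]
    rw [hsum]
    by_cases hK : 0 < #(univ.filter fun j => A (s j))
    · rw [if_pos hK]
    · rw [if_neg hK]
      have hsub : univ.filter (fun j => B (s j)) ⊆ univ.filter (fun j => A (s j)) :=
        Finset.monotone_filter_right univ (fun j _ hj => hBA _ hj)
      have : #(univ.filter fun j => B (s j)) = 0 := by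
        have := Finset.card_le_card hsub
        omega
      rw [this]
      simp
  simp only [ptwise, Finset.mul_sum]
  rw [Finset.sum_comm]
  have inner : ∀ j : J, ∑ s : J → X, (∏ j'', ν (s j'')) *
        ((if B (s j) then (1:ℝ) else 0) / (#(univ.filter fun j' => A (s j')) : ℝ))
      = rB * ((1 - (1-qA)^(Fintype.card J)) / ((Fintype.card J : ℝ) * qA)) := by
    intro j
    haveI : Nonempty J := ⟨j⟩
    have hJ1 : 1 ≤ Fintype.card J := Fintype.card_pos
    rw [split_sum (fun s => (∏ j'', ν (s j'')) *
      ((if B (s j) then (1:ℝ) else 0) / (#(univ.filter fun j' => A (s j')) : ℝ))) j]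
    have hatj : ∀ (x : X) (s' : {j' // j' ≠ j} → X),
        (Equiv.funSplitAt j X).symm (x, s') j = x := by
      intro x s'; simp [Equiv.funSplitAt_symm_apply]
    have perx : ∀ x : X, (∑ s' : {j' // j' ≠ j} → X,
          (∏ j'', ν ((Equiv.funSplitAt j X).symm (x, s') j'')) *
          ((if B ((Equiv.funSplitAt j X).symm (x, s') j) then (1:ℝ) else 0) /
            (#(univ.filter fun j' => A ((Equiv.funSplitAt j X).symm (x, s') j')) : ℝ)))
        = (if B x then ν x else 0) * ∑ s' : {j' // j' ≠ j} → X,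
            (∏ j', ν (s' j')) * (1 / ((#(univ.filter fun j' => A (s' j')) : ℝ) + 1)) := by
      intro x
      by_cases hB : B x
      · have hA : A x := hBA x hB
        rw [if_pos hB, Finset.mul_sum]
        apply Finset.sum_congr rfl
        intro s' _
        rw [split_prod, split_count A j x s', hatj, if_pos hB, if_pos hA]
        push_cast
        ring
      · rw [if_neg hB]
        rw [Finset.sum_eq_zero]
        · simp
        intro s' _
        rw [hatj, if_neg hB]
        simp
    rw [Finset.sum_congr rfl (fun x _ => perx x), ← Finset.sum_mul]
    have hphi := phiJ (J := {j' // j' ≠ j}) ν hν1 A hq0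
    rw [← hqA] at hphi
    have hcard : Fintype.card {j' // j' ≠ j} = Fintype.card J - 1 := by
      simp [Fintype.card_subtype_compl]
    rw [hcard] at hphi
    have h1 : Fintype.card J - 1 + 1 = Fintype.card J := by omega
    have h2 : ((Fintype.card J - 1 : ℕ) : ℝ) + 1 = (Fintype.card J : ℝ) := by
      rw [Nat.cast_sub hJ1]; push_cast; ring
    rw [h1, h2] at hphi
    rw [← hrB]
    congr 1
    convert hphi using 2
    all_goals { congr 1 <;> exact Subsingleton.elim _ _ }
  rw [Finset.sum_congr rfl (fun j _ => inner j), Finset.sum_const, nsmul_eq_mul]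
  rw [Finset.card_univ]
  rcases Nat.eq_zero_or_pos (Fintype.card J) with h0 | hpos
  · rw [h0]; simp
  · have hM : (Fintype.card J : ℝ) ≠ 0 := by positivity
    have hqA' : qA ≠ 0 := ne_of_gt hq0
    field_simp


set_option maxHeartbeats 1600000 in
/-- The bias of the faithfulness estimator is bounded as
`|E[M̂] − m| ≤ Σ_π p(π) · exp(−(n−1)·q(π))`,
where `m = Σ_x μ(x) · q(f(x)|e(x))` is the true faithfulness measure. -/
theorem estimator_bias_le {X Y E : Type*}
    [Fintype X] [Fintype Y] [Fintype E] [Nonempty X] [Nonempty Y] [Nonempty E]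
    (μ : X → ℝ) (hμ0 : ∀ x, 0 ≤ μ x) (hμ1 : ∑ x, μ x = 1)
    (f : X → Y) (e : X → E)
    (R : X → E → Prop) (hR : ∀ x, R x (e x))
    -- q(π) = μ{x : R(x,π)}
    (q : E → ℝ) (hq : ∀ π, q π = ∑ x, if R x π then μ x else 0)
    -- p(π) = μ{x : e(x) = π}
    (p : E → ℝ) (hp : ∀ π, p π = ∑ x, if e x = π then μ x else 0)
    -- for q(π) > 0, q(y|π) = μ{x : R(x,π) ∧ f(x) = y} / q(π)
    (qc : Y → E → ℝ)
    (hqc : ∀ y π, 0 < q π →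
      qc y π = (∑ x, if R x π ∧ f x = y then μ x else 0) / q π)
    -- true faithfulness measure
    (m : ℝ) (hm : m = ∑ x, μ x * qc (f x) (e x))
    (n : ℕ) (hn : 1 ≤ n)
    -- the estimator M̂ on a sample (x_1,…,x_n)
    (Mhat : (Fin n → X) → ℝ)
    (hM : ∀ xs, Mhat xs = (1 / (n : ℝ)) * ∑ i,
      if 1 < (Finset.univ.filter (fun j => R (xs j) (e (xs i)))).card then
        (((Finset.univ.filter
            (fun j => R (xs j) (e (xs i)) ∧ f (xs j) = f (xs i))).card : ℝ) - 1) /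
        (((Finset.univ.filter (fun j => R (xs j) (e (xs i)))).card : ℝ) - 1)
      else 0) :
    |(∑ xs : Fin n → X, (∏ i, μ (xs i)) * Mhat xs) - m| ≤
      ∑ π, p π * Real.exp (-(((n : ℝ) - 1) * q π)) := by
    classical
  -- basic facts about q
  have hq_le_one : ∀ π, q π ≤ 1 := by
    intro π
    rw [hq, ← hμ1]
    exact Finset.sum_le_sum fun x _ => by by_cases h : R x π <;> simp [h, hμ0 x]
  have hμ_le_q : ∀ x, μ x ≤ q (e x) := by
    intro x
    rw [hq]
    have := Finset.single_le_sum (f := fun x' => if R x' (e x) then μ x' else 0)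
      (fun x' _ => by by_cases h : R x' (e x) <;> simp [h, hμ0 x']) (Finset.mem_univ x)
    simpa [hR x] using this
  -- the expected value of each per-sample term
  have stepB : ∀ i : Fin n, (∑ xs : Fin n → X, (∏ j, μ (xs j)) *
      (if 1 < (Finset.univ.filter (fun j => R (xs j) (e (xs i)))).card then
        (((Finset.univ.filter
            (fun j => R (xs j) (e (xs i)) ∧ f (xs j) = f (xs i))).card : ℝ) - 1) /
        (((Finset.univ.filter (fun j => R (xs j) (e (xs i)))).card : ℝ) - 1)
      else 0))
      = ∑ x, μ x * (qc (f x) (e x) * (1 - (1 - q (e x))^(n-1))) := by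
    intro i
    rw [split_sum (J := Fin n) _ i]
    apply Finset.sum_congr rfl
    intro x _
    have hwi : ∀ s' : {j // j ≠ i} → X, (Equiv.funSplitAt i X).symm (x, s') i = x := by
      intro s'; simp [Equiv.funSplitAt_symm_apply]
    -- rewrite the summand for each s'
    have hterm : ∀ s' : {j // j ≠ i} → X,
        (∏ j, μ ((Equiv.funSplitAt i X).symm (x, s') j)) *
        (if 1 < (Finset.univ.filter (fun j => R ((Equiv.funSplitAt i X).symm (x, s') j) (e ((Equiv.funSplitAt i X).symm (x, s') i)))).card then
          (((Finset.univ.filter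
              (fun j => R ((Equiv.funSplitAt i X).symm (x, s') j) (e ((Equiv.funSplitAt i X).symm (x, s') i)) ∧ f ((Equiv.funSplitAt i X).symm (x, s') j) = f ((Equiv.funSplitAt i X).symm (x, s') i))).card : ℝ) - 1) /
          (((Finset.univ.filter (fun j => R ((Equiv.funSplitAt i X).symm (x, s') j) (e ((Equiv.funSplitAt i X).symm (x, s') i)))).card : ℝ) - 1)
        else 0)
        = μ x * ((∏ j', μ (s' j')) *
          (if 0 < (Finset.univ.filter (fun j' => R (s' j') (e x))).card then
            ((Finset.univ.filter (fun j' => R (s' j') (e x) ∧ f (s' j') = f x)).card : ℝ) /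
            ((Finset.univ.filter (fun j' => R (s' j') (e x))).card : ℝ)
          else 0)) := by
      intro s'
      have hprod : ∏ j, μ ((Equiv.funSplitAt i X).symm (x, s') j) = μ x * ∏ j', μ (s' j') := split_prod μ i x s'
      have hcA : (Finset.univ.filter (fun j => R ((Equiv.funSplitAt i X).symm (x, s') j) (e x))).card
          = 1 + (Finset.univ.filter (fun j' => R (s' j') (e x))).card := by
        rw [split_count (fun x' => R x' (e x)) i x s', if_pos (hR x)]
      have hcB : (Finset.univ.filter (fun j => R ((Equiv.funSplitAt i X).symm (x, s') j) (e x) ∧ f ((Equiv.funSplitAt i X).symm (x, s') j) = f x)).card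
          = 1 + (Finset.univ.filter (fun j' => R (s' j') (e x) ∧ f (s' j') = f x)).card := by
        have h := split_count (fun x' => R x' (e x) ∧ f x' = f x) i x s'
        rw [if_pos ⟨hR x, rfl⟩] at h
        convert h using 1 <;> congr!
      simp only [hwi, hprod, hcA, hcB]
      set K := (Finset.univ.filter (fun j' => R (s' j') (e x))).card
      set L := (Finset.univ.filter (fun j' => R (s' j') (e x) ∧ f (s' j') = f x)).card
      have hiff : 1 < 1 + K ↔ 0 < K := by omega
      by_cases hK : 0 < K
      · rw [if_pos (hiff.mpr hK), if_pos hK]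
        push_cast
        ring
      · rw [if_neg (fun h => hK (hiff.mp h)), if_neg hK]
        ring
    rw [Finset.sum_congr rfl (fun s' _ => hterm s'), ← Finset.mul_sum]
    -- now decide whether μ x = 0
    by_cases hμx : μ x = 0
    · rw [hμx]; ring
    · have hμpos : 0 < μ x := lt_of_le_of_ne (hμ0 x) (Ne.symm hμx)
      have hqex : 0 < q (e x) := lt_of_lt_of_le hμpos (hμ_le_q x)
      have hq0' : 0 < ∑ x', if R x' (e x) then μ x' else 0 := by rw [← hq]; exact hqex
      have hcore := core (J := {j // j ≠ i}) μ hμ1 (fun x' => R x' (e x))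
        (fun x' => R x' (e x) ∧ f x' = f x) (fun x' h => h.1) hq0'
      have hcard : Fintype.card {j // j ≠ i} = n - 1 := by
        simp [Fintype.card_subtype_compl]
      rw [hcard] at hcore
      congr 1
      beta_reduce at hcore
      rw [hqc (f x) (e x) hqex, hq (e x)]
      convert hcore using 1 <;> congr!
  -- assemble the expectation
  have hn' : (n:ℝ) ≠ 0 := by positivity
  have stepA : ∑ xs : Fin n → X, (∏ j, μ (xs j)) * Mhat xs
      = ∑ x, μ x * (qc (f x) (e x) * (1 - (1 - q (e x))^(n-1))) := by
    calc ∑ xs : Fin n → X, (∏ j, μ (xs j)) * Mhat xs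
        = ∑ xs : Fin n → X, ∑ i : Fin n, (1/(n:ℝ)) * ((∏ j, μ (xs j)) *
          (if 1 < (Finset.univ.filter (fun j => R (xs j) (e (xs i)))).card then
            (((Finset.univ.filter
                (fun j => R (xs j) (e (xs i)) ∧ f (xs j) = f (xs i))).card : ℝ) - 1) /
            (((Finset.univ.filter (fun j => R (xs j) (e (xs i)))).card : ℝ) - 1)
          else 0)) := by
          apply Finset.sum_congr rfl
          intro xs _
          rw [hM xs, Finset.mul_sum, Finset.mul_sum]
          exact Finset.sum_congr rfl fun i _ => by ring
      _ = ∑ i : Fin n, ∑ xs : Fin n → X, (1/(n:ℝ)) * ((∏ j, μ (xs j)) *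
          (if 1 < (Finset.univ.filter (fun j => R (xs j) (e (xs i)))).card then
            (((Finset.univ.filter
                (fun j => R (xs j) (e (xs i)) ∧ f (xs j) = f (xs i))).card : ℝ) - 1) /
            (((Finset.univ.filter (fun j => R (xs j) (e (xs i)))).card : ℝ) - 1)
          else 0)) := Finset.sum_comm
      _ = ∑ i : Fin n, (1/(n:ℝ)) * ∑ xs : Fin n → X, ((∏ j, μ (xs j)) *
          (if 1 < (Finset.univ.filter (fun j => R (xs j) (e (xs i)))).card then
            (((Finset.univ.filter
                (fun j => R (xs j) (e (xs i)) ∧ f (xs j) = f (xs i))).card : ℝ) - 1) /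
            (((Finset.univ.filter (fun j => R (xs j) (e (xs i)))).card : ℝ) - 1)
          else 0)) := Finset.sum_congr rfl fun i _ => (Finset.mul_sum _ _ _).symm
      _ = ∑ i : Fin n, (1/(n:ℝ)) * ∑ x, μ x * (qc (f x) (e x) * (1 - (1 - q (e x))^(n-1))) :=
          Finset.sum_congr rfl fun i _ => by rw [stepB i]
      _ = ∑ x, μ x * (qc (f x) (e x) * (1 - (1 - q (e x))^(n-1))) := by
          rw [Finset.sum_const, Finset.card_univ, Fintype.card_fin, nsmul_eq_mul]
          field_simp
  -- the bias
  have hbias : (∑ xs : Fin n → X, (∏ j, μ (xs j)) * Mhat xs) - m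
      = -∑ x, μ x * qc (f x) (e x) * (1 - q (e x))^(n-1) := by
    rw [stepA, hm, ← Finset.sum_sub_distrib, ← Finset.sum_neg_distrib]
    exact Finset.sum_congr rfl fun x _ => by ring
  rw [hbias, abs_neg]
  -- pointwise bound
  have hpt : ∀ x, |μ x * qc (f x) (e x) * (1 - q (e x))^(n-1)|
      ≤ μ x * Real.exp (-(((n:ℝ) - 1) * q (e x))) := by
    intro x
    by_cases hqex : 0 < q (e x)
    · have hqc01 : 0 ≤ qc (f x) (e x) ∧ qc (f x) (e x) ≤ 1 := by
        rw [hqc (f x) (e x) hqex]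
        constructor
        · apply div_nonneg _ (le_of_lt hqex)
          exact Finset.sum_nonneg fun x' _ => by
            by_cases h : R x' (e x) ∧ f x' = f x <;> simp [h, hμ0 x']
        · rw [div_le_one hqex, hq]
          exact Finset.sum_le_sum fun x' _ => by
            by_cases h : R x' (e x) ∧ f x' = f x
            · simp [h, h.1]
            · by_cases h2 : R x' (e x) <;> by_cases h3 : f x' = f x <;>
                simp [h, h2, h3, hμ0 x']
      have h1q : 0 ≤ 1 - q (e x) := by linarith [hq_le_one (e x)]
      have hexp : (1 - q (e x))^(n-1) ≤ Real.exp (-(((n:ℝ) - 1) * q (e x))) := by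
        have hle : 1 - q (e x) ≤ Real.exp (-(q (e x))) := by
          have := Real.add_one_le_exp (-(q (e x))); linarith
        calc (1 - q (e x))^(n-1) ≤ (Real.exp (-(q (e x))))^(n-1) :=
              pow_le_pow_left₀ h1q hle _
          _ = Real.exp (-(((n:ℝ) - 1) * q (e x))) := by
              rw [← Real.exp_nat_mul]
              congr 1
              have : ((n - 1 : ℕ) : ℝ) = (n:ℝ) - 1 := by
                rw [Nat.cast_sub hn]; simp
              rw [this]; ring
      have habs : |μ x * qc (f x) (e x) * (1 - q (e x))^(n-1)|
          = μ x * qc (f x) (e x) * (1 - q (e x))^(n-1) := by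
        apply abs_of_nonneg
        apply mul_nonneg (mul_nonneg (hμ0 x) hqc01.1) (pow_nonneg h1q _)
      rw [habs]
      calc μ x * qc (f x) (e x) * (1 - q (e x))^(n-1)
          ≤ μ x * 1 * (1 - q (e x))^(n-1) := by
            apply mul_le_mul_of_nonneg_right _ (pow_nonneg h1q _)
            exact mul_le_mul_of_nonneg_left hqc01.2 (hμ0 x)
        _ = μ x * (1 - q (e x))^(n-1) := by ring
        _ ≤ μ x * Real.exp (-(((n:ℝ) - 1) * q (e x))) :=
            mul_le_mul_of_nonneg_left hexp (hμ0 x)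
    · have hμx : μ x = 0 := le_antisymm (by linarith [hμ_le_q x, not_lt.mp hqex]) (hμ0 x)
      rw [hμx]
      simp
  calc |∑ x, μ x * qc (f x) (e x) * (1 - q (e x))^(n-1)|
      ≤ ∑ x, |μ x * qc (f x) (e x) * (1 - q (e x))^(n-1)| :=
        Finset.abs_sum_le_sum_abs _ _
    _ ≤ ∑ x, μ x * Real.exp (-(((n:ℝ) - 1) * q (e x))) :=
        Finset.sum_le_sum fun x _ => hpt x
    _ = ∑ π, p π * Real.exp (-(((n:ℝ) - 1) * q π)) := by
        have hF : ∑ π, p π * Real.exp (-(((n:ℝ) - 1) * q π))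
            = ∑ x, μ x * Real.exp (-(((n:ℝ) - 1) * q (e x))) := by
          simp only [hp, Finset.sum_mul, ite_mul, zero_mul]
          rw [Finset.sum_comm]
          apply Finset.sum_congr rfl
          intro x _
          rw [Finset.sum_ite_eq Finset.univ (e x)
            (fun π => μ x * Real.exp (-(((n:ℝ) - 1) * q π)))]
          simp
        exact hF.symm
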